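/- Let $n \geq 3$, $\sigma_1, \ldots, \sigma_n > 0$, and $q_k^\pm \in (0,1)$ with $q_k^- + q_{k+1}^+ = 1$. Let $\mathcal{A}$ be the tridiagonal matrix with $\mathcal{A}_{kk} = \sigma_k^2 + \sigma_{k+1}^2$, $\mathcal{A}_{k,k+1} = \mathcal{A}_{k+1,k} = -\sigma_{k+1}^2$, and $\mathcal{Q}$ the tridiagonal matrix with zero diagonal, $\mathcal{Q}_{k,k+1} = q_{k+1}^-$, $\mathcal{Q}_{k+1,k} = q_{k+1}^+$. Then all off-diagonal entries of $\mathcal{A}^{-1}(I - \mathcal{Q})$ are nonnegative if and only if for all $k = 2, \ldots, n-1$: $(1-q_k^-)\sigma_k^2 \geq q_k^- \sigma_{k+1}^2$ and $(1-q_k^+)\sigma_k^2 \geq q_k^+ \sigma_{k-1}^2$. -/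

import Mathlib

noncomputable def PpC (σ : ℕ → ℝ) (i : ℕ) : ℝ := ∑ k ∈ Finset.range i, (σ (k+1) ^ 2)⁻¹

noncomputable def BnC (m : ℕ) (σ : ℕ → ℝ) (a b : ℕ) : ℝ :=
  PpC σ (min a b + 1) * (PpC σ (m+3) - PpC σ (max a b + 1)) / PpC σ (m+3)

lemma PpC_succ (σ : ℕ → ℝ) (t : ℕ) : PpC σ (t+1) = PpC σ t + (σ (t+1) ^ 2)⁻¹ :=
  Finset.sum_range_succ _ _

lemma PpC_zero (σ : ℕ → ℝ) : PpC σ 0 = 0 := Finset.sum_range_zero _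

lemma PpC_lt (σ : ℕ → ℝ) {a b : ℕ} (hab : a < b) (hσ : ∀ k, 1 ≤ k → k ≤ b → 0 < σ k) :
    PpC σ a < PpC σ b := by
  apply Finset.sum_lt_sum_of_subset (i := a)
  · exact Finset.range_subset_range.mpr hab.le
  · exact Finset.mem_range.mpr hab
  · exact Finset.notMem_range_self
  · have : 0 < σ (a+1) := hσ (a+1) (by omega) (by omega)
    positivity
  · intro j hj _
    have hjb := Finset.mem_range.mp hj
    have : 0 < σ (j+1) := hσ (j+1) (by omega) (by omega)
    positivity

lemma pick_sum {n t : ℕ} (ht : t < n) (f : ℕ → ℝ) :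
    (∑ j : Fin n, if (j : ℕ) = t then f (j : ℕ) else 0) = f t := by
  rw [Finset.sum_eq_single (⟨t, ht⟩ : Fin n)]
  · rw [if_pos rfl]
  · intro b _ hb
    exact if_neg (fun hv => hb (Fin.ext hv))
  · intro h
    exact absurd (Finset.mem_univ _) h

lemma pick_sum0 {n t : ℕ} (ht : ¬ t < n) (f : ℕ → ℝ) :
    (∑ j : Fin n, if (j : ℕ) = t then f (j : ℕ) else 0) = 0 :=
  Finset.sum_eq_zero (fun j _ => if_neg (by have := j.isLt; omega))

lemma keyRow (m : ℕ) (σ : ℕ → ℝ) (hσ : ∀ k, 1 ≤ k → k ≤ m + 3 → 0 < σ k)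
    (i k : ℕ) (hi : i < m + 2) (hk : k < m + 2) :
    (σ (i+1) ^ 2 + σ (i+2) ^ 2) * BnC m σ i k
      + (if i + 1 < m + 2 then -σ (i+2) ^ 2 * BnC m σ (i+1) k else 0)
      + (if 1 ≤ i then -σ (i+1) ^ 2 * BnC m σ (i-1) k else 0)
      = if i = k then 1 else 0 := by
  have hT : 0 < PpC σ (m+3) := by
    have := PpC_lt σ (show 0 < m+3 by omega) hσ
    rwa [PpC_zero] at this
  have hs1 : σ (i+1) ≠ 0 := (hσ (i+1) (by omega) (by omega)).ne'
  have hs2 : σ (i+2) ≠ 0 := (hσ (i+2) (by omega) (by omega)).ne'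
  rcases lt_trichotomy i k with h | rfl | h
  · -- i < k
    rw [if_neg (by omega : ¬ i = k), if_pos (by omega : i + 1 < m + 2)]
    simp only [BnC]
    rw [show min i k = i by omega, show max i k = k by omega,
        show min (i+1) k = i+1 by omega, show max (i+1) k = k by omega]
    by_cases hi0 : 1 ≤ i
    · rw [if_pos hi0, show min (i-1) k = i-1 by omega, show max (i-1) k = k by omega,
          show i - 1 + 1 = i by omega]
      have e2 : PpC σ (i+1+1) = PpC σ (i+1) + (σ (i+2) ^ 2)⁻¹ := PpC_succ σ (i+1)
      have e1 : PpC σ (i+1) = PpC σ i + (σ (i+1) ^ 2)⁻¹ := PpC_succ σ i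
      rw [e2, e1]
      field_simp
      ring
    · rw [if_neg hi0]
      have e2 : PpC σ (i+1+1) = PpC σ (i+1) + (σ (i+2) ^ 2)⁻¹ := PpC_succ σ (i+1)
      have e1 : PpC σ (i+1) = PpC σ i + (σ (i+1) ^ 2)⁻¹ := PpC_succ σ i
      have e0 : PpC σ i = 0 := by rw [show i = 0 by omega, PpC_zero]
      rw [e2, e1, e0]
      field_simp
      ring
  · -- i = k
    rw [if_pos rfl]
    simp only [BnC]
    rw [show min i i = i by omega, show max i i = i by omega,
        show min (i+1) i = i by omega, show max (i+1) i = i+1 by omega]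
    by_cases htop : i + 1 < m + 2
    · rw [if_pos htop]
      have e2 : PpC σ (i+1+1) = PpC σ (i+1) + (σ (i+2) ^ 2)⁻¹ := PpC_succ σ (i+1)
      have e1 : PpC σ (i+1) = PpC σ i + (σ (i+1) ^ 2)⁻¹ := PpC_succ σ i
      by_cases hi0 : 1 ≤ i
      · rw [if_pos hi0, show min (i-1) i = i-1 by omega, show max (i-1) i = i by omega,
            show i - 1 + 1 = i by omega, e2, e1]
        field_simp
        ring
      · rw [if_neg hi0]
        have e0 : PpC σ i = 0 := by rw [show i = 0 by omega, PpC_zero]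
        rw [e2, e1, e0]
        field_simp
        ring
    · -- i = m + 1
      rw [if_neg htop, if_pos (show 1 ≤ i by omega)]
      have him : i = m + 1 := by omega
      subst him
      rw [show min (m+1-1) (m+1) = m by omega, show max (m+1-1) (m+1) = m+1 by omega]
      simp only [show m+1+1 = m+2 from rfl, show m+1+2 = m+3 from rfl]
      have h2 : σ (m+2) ≠ 0 := (hσ (m+2) (by omega) (by omega)).ne'
      have h3 : σ (m+3) ≠ 0 := (hσ (m+3) (by omega) (by omega)).ne'
      simp only [← mul_div_assoc, add_zero]
      rw [← add_div, div_eq_iff hT.ne']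
      have e3 : PpC σ (m+3) = PpC σ (m+2) + (σ (m+3) ^ 2)⁻¹ := PpC_succ σ (m+2)
      have e2 : PpC σ (m+2) = PpC σ (m+1) + (σ (m+2) ^ 2)⁻¹ := PpC_succ σ (m+1)
      rw [e3, e2]
      field_simp
      ring
  · -- k < i
    rw [if_neg (by omega : ¬ i = k), if_pos (show 1 ≤ i by omega)]
    simp only [BnC]
    rw [show min i k = k by omega, show max i k = i by omega,
        show min (i-1) k = k by omega, show max (i-1) k = i-1 by omega,
        show i - 1 + 1 = i by omega]
    by_cases htop : i + 1 < m + 2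
    · rw [if_pos htop, show min (i+1) k = k by omega, show max (i+1) k = i+1 by omega]
      have e2 : PpC σ (i+1+1) = PpC σ (i+1) + (σ (i+2) ^ 2)⁻¹ := PpC_succ σ (i+1)
      have e1 : PpC σ (i+1) = PpC σ i + (σ (i+1) ^ 2)⁻¹ := PpC_succ σ i
      rw [e2, e1]
      field_simp
      ring
    · rw [if_neg htop]
      have him : i = m + 1 := by omega
      subst him
      simp only [show m+1+1 = m+2 from rfl, show m+1+2 = m+3 from rfl]
      have h2 : σ (m+2) ≠ 0 := (hσ (m+2) (by omega) (by omega)).ne'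
      have h3 : σ (m+3) ≠ 0 := (hσ (m+3) (by omega) (by omega)).ne'
      simp only [← mul_div_assoc, add_zero]
      rw [← add_div, div_eq_iff hT.ne']
      have e3 : PpC σ (m+3) = PpC σ (m+2) + (σ (m+3) ^ 2)⁻¹ := PpC_succ σ (m+2)
      have e2 : PpC σ (m+2) = PpC σ (m+1) + (σ (m+2) ^ 2)⁻¹ := PpC_succ σ (m+1)
      rw [e3, e2]
      field_simp
      ring

set_option maxHeartbeats 2000000 in
/-- Lemma 3 of the paper (here `n = m + 3`): all off-diagonal entries of `A⁻¹(I - Q)` are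
nonnegative iff condition (A) holds. -/
theorem condA_equiv
    (m : ℕ) (σ qm qp : ℕ → ℝ)
    (hσ : ∀ k, 1 ≤ k → k ≤ m + 3 → 0 < σ k)
    (hq : ∀ k, 2 ≤ k → k ≤ m + 2 → qm k ∈ Set.Ioo (0 : ℝ) 1 ∧ qp k ∈ Set.Ioo (0 : ℝ) 1)
    (helastic : ∀ k, 2 ≤ k → k + 1 ≤ m + 2 → qm k + qp (k + 1) = 1)
    (A Q : Matrix (Fin (m + 2)) (Fin (m + 2)) ℝ)
    (hA : ∀ i j : Fin (m + 2), A i j =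
      if i = j then σ ((i : ℕ) + 1) ^ 2 + σ ((i : ℕ) + 2) ^ 2
      else if (j : ℕ) = (i : ℕ) + 1 then -(σ ((i : ℕ) + 2)) ^ 2
      else if (i : ℕ) = (j : ℕ) + 1 then -(σ ((i : ℕ) + 1)) ^ 2
      else 0)
    (hQ : ∀ i j : Fin (m + 2), Q i j =
      if (j : ℕ) = (i : ℕ) + 1 then qm ((i : ℕ) + 2)
      else if (i : ℕ) = (j : ℕ) + 1 then qp ((i : ℕ) + 1) else 0) :
    (∀ i j : Fin (m + 2), i ≠ j → 0 ≤ (A⁻¹ * (1 - Q)) i j) ↔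
      (∀ k, 2 ≤ k → k ≤ m + 2 →
        qm k * σ (k + 1) ^ 2 ≤ (1 - qm k) * σ k ^ 2 ∧
        qp k * σ (k - 1) ^ 2 ≤ (1 - qp k) * σ k ^ 2) := by
  have hT : 0 < PpC σ (m+3) := by
    have := PpC_lt σ (show 0 < m+3 by omega) hσ
    rwa [PpC_zero] at this
  have hPpos : ∀ a : ℕ, a < m + 2 → 0 < PpC σ (a+1) := by
    intro a ha
    have := PpC_lt σ (show 0 < a+1 by omega) (fun k hk1 hk2 => hσ k hk1 (by omega))
    rwa [PpC_zero] at this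
  have hPlt : ∀ a : ℕ, a < m + 2 → PpC σ (a+1) < PpC σ (m+3) := by
    intro a ha
    exact PpC_lt σ (by omega) hσ
  -- step 1: decompose A
  have hA' : ∀ i j : Fin (m+2), A i j =
      (if (j:ℕ) = (i:ℕ) then σ ((i:ℕ)+1)^2 + σ ((i:ℕ)+2)^2 else 0)
      + (if (j:ℕ) = (i:ℕ)+1 then -σ ((i:ℕ)+2)^2 else 0)
      + (if (j:ℕ) = (i:ℕ)-1 then (if 1 ≤ (i:ℕ) then -σ ((i:ℕ)+1)^2 else 0) else 0) := by
    intro i j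
    rw [hA i j]
    simp only [Fin.ext_iff]
    split_ifs <;> first | ring1 | omega
  -- step 2: A * B = 1
  have hAB : A * Matrix.of (fun i j : Fin (m+2) => BnC m σ (i:ℕ) (j:ℕ)) = 1 := by
    ext i k
    rw [Matrix.mul_apply, Matrix.one_apply]
    have hsplit : ∀ j : Fin (m+2),
        A i j * Matrix.of (fun i j : Fin (m+2) => BnC m σ (i:ℕ) (j:ℕ)) j k =
        (if (j:ℕ) = (i:ℕ) then (σ ((i:ℕ)+1)^2 + σ ((i:ℕ)+2)^2) * BnC m σ (j:ℕ) (k:ℕ) else 0)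
        + (if (j:ℕ) = (i:ℕ)+1 then -σ ((i:ℕ)+2)^2 * BnC m σ (j:ℕ) (k:ℕ) else 0)
        + (if (j:ℕ) = (i:ℕ)-1 then
            (if 1 ≤ (i:ℕ) then -σ ((i:ℕ)+1)^2 else 0) * BnC m σ (j:ℕ) (k:ℕ) else 0) := by
      intro j
      rw [hA' i j, Matrix.of_apply]
      simp only [add_mul, ite_mul, zero_mul]
    rw [Finset.sum_congr rfl (fun j _ => hsplit j), Finset.sum_add_distrib,
        Finset.sum_add_distrib]
    have S1 : (∑ j : Fin (m+2), if (j:ℕ) = (i:ℕ) then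
        (σ ((i:ℕ)+1)^2 + σ ((i:ℕ)+2)^2) * BnC m σ (j:ℕ) (k:ℕ) else 0)
        = (σ ((i:ℕ)+1)^2 + σ ((i:ℕ)+2)^2) * BnC m σ (i:ℕ) (k:ℕ) :=
      pick_sum i.isLt (fun a => (σ ((i:ℕ)+1)^2 + σ ((i:ℕ)+2)^2) * BnC m σ a (k:ℕ))
    have S3 : (∑ j : Fin (m+2), if (j:ℕ) = (i:ℕ)-1 then
        (if 1 ≤ (i:ℕ) then -σ ((i:ℕ)+1)^2 else 0) * BnC m σ (j:ℕ) (k:ℕ) else 0)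
        = (if 1 ≤ (i:ℕ) then -σ ((i:ℕ)+1)^2 else 0) * BnC m σ ((i:ℕ)-1) (k:ℕ) :=
      pick_sum (show (i:ℕ)-1 < m+2 by have := i.isLt; omega)
        (fun a => (if 1 ≤ (i:ℕ) then -σ ((i:ℕ)+1)^2 else 0) * BnC m σ a (k:ℕ))
    rw [S1, S3]
    have hkey := keyRow m σ hσ (i:ℕ) (k:ℕ) i.isLt k.isLt
    by_cases h2 : (i:ℕ)+1 < m+2
    · have S2 : (∑ j : Fin (m+2), if (j:ℕ) = (i:ℕ)+1 then
          -σ ((i:ℕ)+2)^2 * BnC m σ (j:ℕ) (k:ℕ) else 0)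
          = -σ ((i:ℕ)+2)^2 * BnC m σ ((i:ℕ)+1) (k:ℕ) :=
        pick_sum h2 (fun a => -σ ((i:ℕ)+2)^2 * BnC m σ a (k:ℕ))
      rw [S2]
      rw [if_pos h2] at hkey
      rw [ite_mul, zero_mul, hkey]
      by_cases hik : (i:ℕ) = (k:ℕ)
      · rw [if_pos hik, if_pos (Fin.ext hik)]
      · rw [if_neg hik, if_neg (fun hc => hik (congrArg Fin.val hc))]
    · have S2 : (∑ j : Fin (m+2), if (j:ℕ) = (i:ℕ)+1 then
          -σ ((i:ℕ)+2)^2 * BnC m σ (j:ℕ) (k:ℕ) else 0) = 0 :=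
        pick_sum0 h2 (fun a => -σ ((i:ℕ)+2)^2 * BnC m σ a (k:ℕ))
      rw [S2]
      rw [if_neg h2] at hkey
      rw [ite_mul, zero_mul, hkey]
      by_cases hik : (i:ℕ) = (k:ℕ)
      · rw [if_pos hik, if_pos (Fin.ext hik)]
      · rw [if_neg hik, if_neg (fun hc => hik (congrArg Fin.val hc))]
  have hInv : A⁻¹ = Matrix.of (fun i j : Fin (m+2) => BnC m σ (i:ℕ) (j:ℕ)) :=
    Matrix.inv_eq_right_inv hAB
  -- entries of A⁻¹ * (1 - Q)
  have hCE : ∀ i j : Fin (m+2), (A⁻¹ * (1 - Q)) i j =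
      BnC m σ (i:ℕ) (j:ℕ)
      - (if 1 ≤ (j:ℕ) then qm ((j:ℕ)+1) * BnC m σ (i:ℕ) ((j:ℕ)-1) else 0)
      - (if (j:ℕ)+1 < m+2 then qp ((j:ℕ)+2) * BnC m σ (i:ℕ) ((j:ℕ)+1) else 0) := by
    intro i j
    rw [hInv, Matrix.mul_apply]
    have hsplit : ∀ k : Fin (m+2),
        Matrix.of (fun i j : Fin (m+2) => BnC m σ (i:ℕ) (j:ℕ)) i k * (1 - Q) k j =
        (if (k:ℕ) = (j:ℕ) then BnC m σ (i:ℕ) (k:ℕ) else 0)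
        - (if (k:ℕ) = (j:ℕ)-1 then
            (if 1 ≤ (j:ℕ) then qm ((k:ℕ)+2) else 0) * BnC m σ (i:ℕ) (k:ℕ) else 0)
        - (if (k:ℕ) = (j:ℕ)+1 then qp ((k:ℕ)+1) * BnC m σ (i:ℕ) (k:ℕ) else 0) := by
      intro k
      rw [Matrix.sub_apply, Matrix.one_apply, hQ, Matrix.of_apply]
      simp only [Fin.ext_iff]
      split_ifs <;> first | ring1 | omega
    rw [Finset.sum_congr rfl (fun k _ => hsplit k), Finset.sum_sub_distrib,
        Finset.sum_sub_distrib]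
    have S1 : (∑ k : Fin (m+2), if (k:ℕ) = (j:ℕ) then BnC m σ (i:ℕ) (k:ℕ) else 0)
        = BnC m σ (i:ℕ) (j:ℕ) := pick_sum j.isLt (fun a => BnC m σ (i:ℕ) a)
    have S2 : (∑ k : Fin (m+2), if (k:ℕ) = (j:ℕ)-1 then
          (if 1 ≤ (j:ℕ) then qm ((k:ℕ)+2) else 0) * BnC m σ (i:ℕ) (k:ℕ) else 0)
        = (if 1 ≤ (j:ℕ) then qm ((j:ℕ)-1+2) else 0) * BnC m σ (i:ℕ) ((j:ℕ)-1) :=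
      pick_sum (show (j:ℕ)-1 < m+2 by have := j.isLt; omega)
        (fun a => (if 1 ≤ (j:ℕ) then qm (a+2) else 0) * BnC m σ (i:ℕ) a)
    rw [S1, S2]
    by_cases h3 : (j:ℕ)+1 < m+2
    · have S3 : (∑ k : Fin (m+2), if (k:ℕ) = (j:ℕ)+1 then
            qp ((k:ℕ)+1) * BnC m σ (i:ℕ) (k:ℕ) else 0)
          = qp ((j:ℕ)+1+1) * BnC m σ (i:ℕ) ((j:ℕ)+1) :=
        pick_sum h3 (fun a => qp (a+1) * BnC m σ (i:ℕ) a)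
      rw [S3, if_pos h3, show (j:ℕ)+1+1 = (j:ℕ)+2 from rfl]
      by_cases hj0 : 1 ≤ (j:ℕ)
      · rw [if_pos hj0, if_pos hj0, show (j:ℕ)-1+2 = (j:ℕ)+1 by omega]
      · rw [if_neg hj0, if_neg hj0, zero_mul]
    · have S3 : (∑ k : Fin (m+2), if (k:ℕ) = (j:ℕ)+1 then
            qp ((k:ℕ)+1) * BnC m σ (i:ℕ) (k:ℕ) else 0) = 0 :=
        pick_sum0 h3 (fun a => qp (a+1) * BnC m σ (i:ℕ) a)
      rw [S3, if_neg h3]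
      by_cases hj0 : 1 ≤ (j:ℕ)
      · rw [if_pos hj0, if_pos hj0, show (j:ℕ)-1+2 = (j:ℕ)+1 by omega]
      · rw [if_neg hj0, if_neg hj0, zero_mul]
  have hsig : ∀ t : ℕ, 1 ≤ t → t ≤ m+3 → σ t ≠ 0 := fun t h1 h2 => (hσ t h1 h2).ne'
  -- closed form for off-diagonal entries
  have hCform : ∀ i j : Fin (m+2), (i:ℕ) ≠ (j:ℕ) → (A⁻¹ * (1 - Q)) i j =
      if (i:ℕ) < (j:ℕ) then
        (PpC σ ((i:ℕ)+1) / PpC σ (m+3)) *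
          ((1 - qm ((j:ℕ)+1)) * (σ ((j:ℕ)+2) ^ 2)⁻¹ - qm ((j:ℕ)+1) * (σ ((j:ℕ)+1) ^ 2)⁻¹)
      else
        ((PpC σ (m+3) - PpC σ ((i:ℕ)+1)) / PpC σ (m+3)) *
          ((1 - qp ((j:ℕ)+2)) * (σ ((j:ℕ)+1) ^ 2)⁻¹ - qp ((j:ℕ)+2) * (σ ((j:ℕ)+2) ^ 2)⁻¹) := by
    intro i j hij
    have hiLt := i.isLt
    have hjLt := j.isLt
    rw [hCE i j]
    have hs1 : σ ((j:ℕ)+1) ≠ 0 := hsig _ (by omega) (by omega)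
    have hs2 : σ ((j:ℕ)+2) ≠ 0 := hsig _ (by omega) (by omega)
    by_cases hlt : (i:ℕ) < (j:ℕ)
    · rw [if_pos hlt, if_pos (show 1 ≤ (j:ℕ) by omega)]
      by_cases hjtop : (j:ℕ)+1 < m+2
      · rw [if_pos hjtop]
        have hel : qp ((j:ℕ)+2) = 1 - qm ((j:ℕ)+1) := by
          have h := helastic ((j:ℕ)+1) (by omega) (by omega)
          rw [show (j:ℕ)+1+1 = (j:ℕ)+2 from rfl] at h
          linarith
        rw [hel]
        simp only [BnC]
        rw [show min (i:ℕ) (j:ℕ) = (i:ℕ) by omega, show max (i:ℕ) (j:ℕ) = (j:ℕ) by omega,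
            show min (i:ℕ) ((j:ℕ)-1) = (i:ℕ) by omega,
            show max (i:ℕ) ((j:ℕ)-1) = (j:ℕ)-1 by omega,
            show min (i:ℕ) ((j:ℕ)+1) = (i:ℕ) by omega,
            show max (i:ℕ) ((j:ℕ)+1) = (j:ℕ)+1 by omega,
            show (j:ℕ)-1+1 = (j:ℕ) by omega]
        have e2 : PpC σ ((j:ℕ)+1+1) = PpC σ ((j:ℕ)+1) + (σ ((j:ℕ)+2) ^ 2)⁻¹ :=
          PpC_succ σ ((j:ℕ)+1)
        have e1 : PpC σ ((j:ℕ)+1) = PpC σ (j:ℕ) + (σ ((j:ℕ)+1) ^ 2)⁻¹ := PpC_succ σ (j:ℕ)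
        rw [e2, e1]
        field_simp
        ring
      · rw [if_neg hjtop, sub_zero]
        simp only [BnC]
        rw [show min (i:ℕ) (j:ℕ) = (i:ℕ) by omega, show max (i:ℕ) (j:ℕ) = (j:ℕ) by omega,
            show min (i:ℕ) ((j:ℕ)-1) = (i:ℕ) by omega,
            show max (i:ℕ) ((j:ℕ)-1) = (j:ℕ)-1 by omega,
            show (j:ℕ)-1+1 = (j:ℕ) by omega]
        have key1 : PpC σ (m+3) - PpC σ ((j:ℕ)+1) = (σ ((j:ℕ)+2) ^ 2)⁻¹ := by
          rw [show m+3 = (j:ℕ)+1+1 by omega, PpC_succ σ ((j:ℕ)+1)]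
          ring
        have key2 : PpC σ (m+3) - PpC σ (j:ℕ) = (σ ((j:ℕ)+1) ^ 2)⁻¹ + (σ ((j:ℕ)+2) ^ 2)⁻¹ := by
          rw [show m+3 = (j:ℕ)+1+1 by omega, PpC_succ σ ((j:ℕ)+1), PpC_succ σ (j:ℕ)]
          ring
        rw [key1, key2]
        field_simp
        ring
    · rw [if_neg hlt]
      have hgt : (j:ℕ) < (i:ℕ) := by omega
      rw [if_pos (show (j:ℕ)+1 < m+2 by omega)]
      simp only [BnC]
      rw [show min (i:ℕ) (j:ℕ) = (j:ℕ) by omega, show max (i:ℕ) (j:ℕ) = (i:ℕ) by omega,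
          show min (i:ℕ) ((j:ℕ)+1) = (j:ℕ)+1 by omega,
          show max (i:ℕ) ((j:ℕ)+1) = (i:ℕ) by omega]
      have e2 : PpC σ ((j:ℕ)+1+1) = PpC σ ((j:ℕ)+1) + (σ ((j:ℕ)+2) ^ 2)⁻¹ :=
        PpC_succ σ ((j:ℕ)+1)
      have e1 : PpC σ ((j:ℕ)+1) = PpC σ (j:ℕ) + (σ ((j:ℕ)+1) ^ 2)⁻¹ := PpC_succ σ (j:ℕ)
      by_cases hj0 : 1 ≤ (j:ℕ)
      · rw [if_pos hj0, show min (i:ℕ) ((j:ℕ)-1) = (j:ℕ)-1 by omega,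
            show max (i:ℕ) ((j:ℕ)-1) = (i:ℕ) by omega, show (j:ℕ)-1+1 = (j:ℕ) by omega]
        have hel : qm ((j:ℕ)+1) = 1 - qp ((j:ℕ)+2) := by
          have h := helastic ((j:ℕ)+1) (by omega) (by omega)
          rw [show (j:ℕ)+1+1 = (j:ℕ)+2 from rfl] at h
          linarith
        rw [hel, e2, e1]
        field_simp
        ring
      · rw [if_neg hj0, sub_zero]
        have e0 : PpC σ (j:ℕ) = 0 := by rw [show (j:ℕ) = 0 by omega, PpC_zero]
        rw [e2, e1, e0]
        field_simp
        ring
  have hfac : ∀ {f b : ℝ}, 0 < f → 0 ≤ f * b → 0 ≤ b := fun {f b} hf h =>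
    le_of_not_gt (fun hb => absurd h (not_le.mpr (mul_neg_of_pos_of_neg hf hb)))
  constructor
  · intro h
    have h' : ∀ a b : ℕ, ∀ ha : a < m+2, ∀ hb : b < m+2, a ≠ b →
        0 ≤ (A⁻¹ * (1 - Q)) ⟨a, ha⟩ ⟨b, hb⟩ := fun a b ha hb hab =>
      h ⟨a, ha⟩ ⟨b, hb⟩ (fun hc => hab (congrArg Fin.val hc))
    have hCform' : ∀ a b : ℕ, ∀ ha : a < m+2, ∀ hb : b < m+2, a ≠ b →
        (A⁻¹ * (1 - Q)) ⟨a, ha⟩ ⟨b, hb⟩ =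
        if a < b then
          (PpC σ (a+1) / PpC σ (m+3)) *
            ((1 - qm (b+1)) * (σ (b+2) ^ 2)⁻¹ - qm (b+1) * (σ (b+1) ^ 2)⁻¹)
        else
          ((PpC σ (m+3) - PpC σ (a+1)) / PpC σ (m+3)) *
            ((1 - qp (b+2)) * (σ (b+1) ^ 2)⁻¹ - qp (b+2) * (σ (b+2) ^ 2)⁻¹) :=
      fun a b ha hb hab => hCform ⟨a, ha⟩ ⟨b, hb⟩ hab
    intro k hk2 hkm
    have hsk : 0 < σ k := hσ k (by omega) (by omega)
    have hsk1 : 0 < σ (k+1) := hσ (k+1) (by omega) (by omega)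
    have hskm : 0 < σ (k-1) := hσ (k-1) (by omega) (by omega)
    constructor
    · have hc := h' 0 (k-1) (by omega) (by omega) (by omega)
      rw [hCform' 0 (k-1) (by omega) (by omega) (by omega), if_pos (by omega)] at hc
      rw [show k-1+1 = k by omega, show k-1+2 = k+1 by omega] at hc
      have hb := hfac (div_pos (hPpos 0 (by omega)) hT) hc
      have h2 := mul_nonneg hb (show (0:ℝ) ≤ σ k ^ 2 * σ (k+1) ^ 2 by positivity)
      have hident : ((1 - qm k) * (σ (k+1) ^ 2)⁻¹ - qm k * (σ k ^ 2)⁻¹) *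
          (σ k ^ 2 * σ (k+1) ^ 2) = (1 - qm k) * σ k ^ 2 - qm k * σ (k+1) ^ 2 := by
        field_simp
      rw [hident] at h2
      linarith
    · have hc := h' (k-1) (k-2) (by omega) (by omega) (by omega)
      rw [hCform' (k-1) (k-2) (by omega) (by omega) (by omega), if_neg (by omega)] at hc
      rw [show k-2+2 = k by omega, show k-2+1 = k-1 by omega, show k-1+1 = k by omega] at hc
      have hfpos : 0 < (PpC σ (m+3) - PpC σ k) / PpC σ (m+3) := by
        apply div_pos _ hT
        have : PpC σ k < PpC σ (m+3) := PpC_lt σ (by omega) hσ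
        linarith
      have hb := hfac hfpos hc
      have h2 := mul_nonneg hb (show (0:ℝ) ≤ σ (k-1) ^ 2 * σ k ^ 2 by positivity)
      have hident : ((1 - qp k) * (σ (k-1) ^ 2)⁻¹ - qp k * (σ k ^ 2)⁻¹) *
          (σ (k-1) ^ 2 * σ k ^ 2) = (1 - qp k) * σ k ^ 2 - qp k * σ (k-1) ^ 2 := by
        field_simp
      rw [hident] at h2
      linarith
  · intro hcond i j hij
    have hij' : (i:ℕ) ≠ (j:ℕ) := fun hv => hij (Fin.ext hv)
    have hiLt := i.isLt
    have hjLt := j.isLt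
    rw [hCform i j hij']
    by_cases hlt : (i:ℕ) < (j:ℕ)
    · rw [if_pos hlt]
      have hcm := (hcond ((j:ℕ)+1) (by omega) (by omega)).1
      rw [show (j:ℕ)+1+1 = (j:ℕ)+2 from rfl] at hcm
      have hs1 : 0 < σ ((j:ℕ)+1) := hσ _ (by omega) (by omega)
      have hs2 : 0 < σ ((j:ℕ)+2) := hσ _ (by omega) (by omega)
      apply mul_nonneg (le_of_lt (div_pos (hPpos (i:ℕ) i.isLt) hT))
      have hident : (1 - qm ((j:ℕ)+1)) * (σ ((j:ℕ)+2) ^ 2)⁻¹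
            - qm ((j:ℕ)+1) * (σ ((j:ℕ)+1) ^ 2)⁻¹
          = ((1 - qm ((j:ℕ)+1)) * σ ((j:ℕ)+1) ^ 2 - qm ((j:ℕ)+1) * σ ((j:ℕ)+2) ^ 2)
            / (σ ((j:ℕ)+1) ^ 2 * σ ((j:ℕ)+2) ^ 2) := by
        field_simp
      rw [hident]
      apply div_nonneg _ (by positivity)
      linarith
    · rw [if_neg hlt]
      have hcp := (hcond ((j:ℕ)+2) (by omega) (by omega)).2
      rw [show (j:ℕ)+2-1 = (j:ℕ)+1 by omega] at hcp
      have hs1 : 0 < σ ((j:ℕ)+1) := hσ _ (by omega) (by omega)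
      have hs2 : 0 < σ ((j:ℕ)+2) := hσ _ (by omega) (by omega)
      apply mul_nonneg
      · apply div_nonneg _ hT.le
        have := hPlt (i:ℕ) i.isLt
        linarith
      · have hident : (1 - qp ((j:ℕ)+2)) * (σ ((j:ℕ)+1) ^ 2)⁻¹
              - qp ((j:ℕ)+2) * (σ ((j:ℕ)+2) ^ 2)⁻¹
            = ((1 - qp ((j:ℕ)+2)) * σ ((j:ℕ)+2) ^ 2 - qp ((j:ℕ)+2) * σ ((j:ℕ)+1) ^ 2)
              / (σ ((j:ℕ)+1) ^ 2 * σ ((j:ℕ)+2) ^ 2) := by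
          field_simp
        rw [hident]
        apply div_nonneg _ (by positivity)
        linarith
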